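/- The determinant-sign map of a spanning configuration of nonzero vectors in ℝ^r satisfies the three-term Grassmann–Plücker sign condition: for nonzero vectors v₁,...,v_r, w₁, w₂ in ℝ^r, if det(v₁,...,v_{r-2},w₁,v_r)·det(v₁,...,v_{r-1},w₂) ≥ 0 and det(v₁,...,v_{r-2},w₂,v_r)·det(v₁,...,v_{r-1},-w₁) ≥ 0, then det(v₁,...,v_r)·det(v₁,...,v_{r-2},w₁,w₂) ≥ 0. -/

import Mathlib

/-- The determinant of the `r × r` matrix whose columns are the vectors `u 0, …, u (r-1)`. -/
noncomputable def colDet (r : ℕ) (u : Fin r → Fin r → ℝ) : ℝ :=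
  Matrix.det (Matrix.of fun i j : Fin r => u j i)

lemma colDet_eq (r : ℕ) (u : Fin r → Fin r → ℝ) :
    colDet r u = Matrix.det (Matrix.of u) := by
  rw [colDet, ← Matrix.det_transpose]
  rfl

lemma det_updateRow_finsetsum {n ι : Type*} [DecidableEq n] [Fintype n] [DecidableEq ι]
    (N : Matrix n n ℝ) (q : n) (s : Finset ι) (f : ι → n → ℝ) :
    Matrix.det (N.updateRow q (∑ j ∈ s, f j)) = ∑ j ∈ s, Matrix.det (N.updateRow q (f j)) := by
  induction s using Finset.induction_on with
  | empty =>
      have h0 : (0 : n → ℝ) = (0 : ℝ) • (0 : n → ℝ) := by simp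
      simp only [Finset.sum_empty]
      rw [h0, Matrix.det_updateRow_smul, zero_mul]
  | insert _ _ hk ih =>
      rw [Finset.sum_insert hk, Matrix.det_updateRow_add, ih, Finset.sum_insert hk]

/-- Row swap: determinant of a matrix with two rows exchanged. -/
lemma det_rowswap {n : Type*} [DecidableEq n] [Fintype n]
    (M : Matrix n n ℝ) {p q : n} (hpq : p ≠ q) (x : n → ℝ) :
    Matrix.det ((M.updateRow p x).updateRow q (M p)) = - Matrix.det (M.updateRow q x) := by
  have h : (M.updateRow p x).updateRow q (M p)
      = (M.updateRow q x).submatrix (Equiv.swap p q) id := by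
    ext i j
    rcases eq_or_ne i q with rfl | hiq
    · simp [Matrix.updateRow_apply, hpq, Equiv.swap_apply_right, hpq.symm]
    · rcases eq_or_ne i p with rfl | hip
      · simp [Matrix.updateRow_apply, hpq, Equiv.swap_apply_left]
      · simp [Matrix.updateRow_apply, hiq, hip, Equiv.swap_apply_of_ne_of_ne hip hiq]
  rw [h, Matrix.det_permute, Equiv.Perm.sign_swap hpq]
  push_cast
  ring

/-- the three-term Grassmann–Plücker sign condition for determinants of
nonzero vectors `v₁,…,v_r, w₁, w₂` in `ℝ^r`. -/
theorem det_grassmann_pluecker_sign (r : ℕ) (hr : 2 ≤ r)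
    (v : Fin r → Fin r → ℝ) (w₁ w₂ : Fin r → ℝ)
    (hv : ∀ i, v i ≠ 0) (hw₁ : w₁ ≠ 0) (hw₂ : w₂ ≠ 0)
    (h1 : 0 ≤ colDet r (Function.update v ⟨r - 2, by omega⟩ w₁) *
            colDet r (Function.update v ⟨r - 1, by omega⟩ w₂))
    (h2 : 0 ≤ colDet r (Function.update v ⟨r - 2, by omega⟩ w₂) *
            colDet r (Function.update v ⟨r - 1, by omega⟩ (-w₁))) :
    0 ≤ colDet r v *
        colDet r (Function.update (Function.update v ⟨r - 2, by omega⟩ w₁)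
          ⟨r - 1, by omega⟩ w₂) := by
  simp only [colDet_eq] at h1 h2 ⊢
  set M : Matrix (Fin r) (Fin r) ℝ := Matrix.of v with hMdef
  have hp : r - 2 < r := by omega
  have hq : r - 1 < r := by omega
  set p : Fin r := ⟨r - 2, hp⟩ with hpdef
  set q : Fin r := ⟨r - 1, hq⟩ with hqdef
  have hpq : p ≠ q := Fin.ne_of_val_ne (show r - 2 ≠ r - 1 by omega)
  -- rephrase the updates as row updates of M
  have e1 : Matrix.of (Function.update v ⟨r - 2, by omega⟩ w₁) = M.updateRow p w₁ := rfl
  have e2 : Matrix.of (Function.update v ⟨r - 1, by omega⟩ w₂) = M.updateRow q w₂ := rfl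
  have e3 : Matrix.of (Function.update v ⟨r - 2, by omega⟩ w₂) = M.updateRow p w₂ := rfl
  have e4 : Matrix.of (Function.update v ⟨r - 1, by omega⟩ (-w₁)) = M.updateRow q (-w₁) := rfl
  have e5 : Matrix.of (Function.update (Function.update v ⟨r - 2, by omega⟩ w₁)
      ⟨r - 1, by omega⟩ w₂) = (M.updateRow p w₁).updateRow q w₂ := rfl
  rw [e1, e2] at h1
  rw [e3, e4] at h2
  have e5' : Matrix.of (Function.update (Function.update v p w₁) q w₂)
      = (M.updateRow p w₁).updateRow q w₂ := rfl
  rw [e5']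
  by_cases hM : M.det = 0
  · rw [hM, zero_mul]
  -- the coefficients of w₂ in the row basis of M
  set c : Fin r → ℝ := Matrix.vecMul w₂ M⁻¹ with hcdef
  have hc : w₂ = ∑ j, c j • M j := by
    have h := Matrix.vecMul_vecMul w₂ M⁻¹ M
    rw [Matrix.nonsing_inv_mul M (by simpa using hM), Matrix.vecMul_one] at h
    funext k
    rw [← h]
    simp [hcdef, Matrix.vecMul, dotProduct, Finset.sum_apply, mul_comm]
  -- det of M with row q replaced by w₂
  have hY2 : Matrix.det (M.updateRow q w₂) = c q * M.det := by
    rw [hc, Matrix.det_updateRow_sum]; simp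
  have hX2 : Matrix.det (M.updateRow p w₂) = c p * M.det := by
    rw [hc, Matrix.det_updateRow_sum]; simp
  -- det of (M with row p = w₁) with row q replaced by w₂
  have hF : Matrix.det ((M.updateRow p w₁).updateRow q w₂)
      = c q * Matrix.det (M.updateRow p w₁) - c p * Matrix.det (M.updateRow q w₁) := by
    rw [hc, det_updateRow_finsetsum]
    have hterm : ∀ j : Fin r,
        Matrix.det ((M.updateRow p w₁).updateRow q (c j • M j))
          = c j * Matrix.det ((M.updateRow p w₁).updateRow q (M j)) := fun j =>
      Matrix.det_updateRow_smul _ _ _ _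
    simp only [hterm]
    have hz : ∀ j : Fin r, j ∉ ({p, q} : Finset (Fin r)) →
        c j * Matrix.det ((M.updateRow p w₁).updateRow q (M j)) = 0 := by
      intro j hj
      simp only [Finset.mem_insert, Finset.mem_singleton, not_or] at hj
      obtain ⟨hjp, hjq⟩ := hj
      have : Matrix.det ((M.updateRow p w₁).updateRow q (M j)) = 0 := by
        apply Matrix.det_zero_of_row_eq hjq
        simp [Matrix.updateRow_apply, hjp, hjq]
      rw [this, mul_zero]
    have hsum : ∑ j, c j * Matrix.det ((M.updateRow p w₁).updateRow q (M j))
        = ∑ j ∈ ({p, q} : Finset (Fin r)),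
            c j * Matrix.det ((M.updateRow p w₁).updateRow q (M j)) :=
      (Finset.sum_subset (Finset.subset_univ _) fun x _ hx => hz x hx).symm
    rw [hsum, Finset.sum_pair hpq]
    have hq_term : (M.updateRow p w₁).updateRow q (M q) = M.updateRow p w₁ := by
      have : M q = (M.updateRow p w₁) q := (Matrix.updateRow_ne hpq.symm).symm
      rw [this, Matrix.updateRow_eq_self]
    rw [hq_term, det_rowswap M hpq w₁]
    ring
  -- det of M with row q replaced by -w₁
  have hnegY1 : Matrix.det (M.updateRow q (-w₁)) = - Matrix.det (M.updateRow q w₁) := by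
    have : (-w₁) = (-1 : ℝ) • w₁ := by funext k; simp
    rw [this, Matrix.det_updateRow_smul]; ring
  rw [hnegY1] at h2
  rw [hY2] at h1
  rw [hX2] at h2
  rw [hF]
  nlinarith [h1, h2]
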